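/- arXiv:1802.09630 — 2 statements merged into one kernel-verified Lean document; each statement's English description precedes it below -/
import Mathlib

section
/- For every real symmetric d×d matrix H, the columns sum Σᵢ max{λᵢ(H),0} ≤ Σᵢ λᵢ(H₁) holds for any symmetric positive semidefinite H₁ and H₂ with H = H₁ − H₂, i.e., the sum of positive parts of eigenvalues of H is at most the trace of H₁. -/
open Matrix

private lemma trace_nonneg_of_posSemidef {n : ℕ} {A : Matrix (Fin n) (Fin n) ℝ}
    (hA : A.PosSemidef) : 0 ≤ A.trace := by
  rw [Matrix.trace]
  refine Finset.sum_nonneg fun i _ => ?_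
  exact hA.diag_nonneg

open scoped MatrixOrder in
private lemma trace_mul_nonneg_of_posSemidef {n : ℕ} {A B : Matrix (Fin n) (Fin n) ℝ}
    (hA : A.PosSemidef) (hB : B.PosSemidef) : 0 ≤ (A * B).trace := by
  have hS : CFC.sqrt A * CFC.sqrt A = A := CFC.sqrt_mul_sqrt_self A hA.nonneg
  have herm : (CFC.sqrt A).IsHermitian := (CFC.sqrt_nonneg A).posSemidef.1
  have h := hB.conjTranspose_mul_mul_same (CFC.sqrt A)
  rw [herm.eq] at h
  have : (CFC.sqrt A * B * CFC.sqrt A).trace = (A * B).trace := by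
    rw [Matrix.trace_mul_comm, ← Matrix.mul_assoc, hS]
  rw [← this]
  exact trace_nonneg_of_posSemidef h

/-- Sum of positive parts of eigenvalues of H is at most the sum of
eigenvalues (= trace) of H₁, whenever H = H₁ − H₂ with H₁, H₂ PSD. -/
theorem stmt_5 (d : ℕ) (H H₁ H₂ : Matrix (Fin d) (Fin d) ℝ)
    (hH : H.IsHermitian) (hH₁ : H₁.PosSemidef) (hH₂ : H₂.PosSemidef)
    (hdec : H = H₁ - H₂) :
    ∑ i, max (hH.eigenvalues i) 0 ≤ ∑ i, hH₁.isHermitian.eigenvalues i := by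
  classical
  set U : Matrix (Fin d) (Fin d) ℝ := (hH.eigenvectorUnitary : Matrix (Fin d) (Fin d) ℝ) with hU
  have hU1 : U * star U = 1 := (Matrix.mem_unitaryGroup_iff).mp hH.eigenvectorUnitary.2
  have hU2 : star U * U = 1 := (Matrix.mem_unitaryGroup_iff').mp hH.eigenvectorUnitary.2
  set lam := hH.eigenvalues with hlam
  set e : Fin d → ℝ := fun i => if 0 ≤ lam i then 1 else 0 with he
  set P : Matrix (Fin d) (Fin d) ℝ := U * Matrix.diagonal e * star U with hP
  -- trace of conjugation
  have trace_conj : ∀ M : Matrix (Fin d) (Fin d) ℝ, (U * M * star U).trace = M.trace := by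
    intro M
    rw [Matrix.trace_mul_cycle, hU2, Matrix.one_mul]
  have hspec : H = U * Matrix.diagonal lam * star U := by
    have := hH.spectral_theorem
    simpa [hU] using this
  -- P is PSD
  have hPpsd : P.PosSemidef := by
    refine (Matrix.posSemidef_diagonal_iff.mpr fun i => ?_).mul_mul_conjTranspose_same U
    simp only [he]
    split <;> norm_num
  -- 1 - P is PSD
  have h1Ppsd : ((1 : Matrix (Fin d) (Fin d) ℝ) - P).PosSemidef := by
    have : (1 : Matrix (Fin d) (Fin d) ℝ) - P
        = U * Matrix.diagonal (fun i => 1 - e i) * star U := by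
      have : Matrix.diagonal (fun i => 1 - e i)
          = 1 - Matrix.diagonal e := by
        rw [← Matrix.diagonal_one, Matrix.diagonal_sub]
      rw [this, Matrix.mul_sub, Matrix.sub_mul, mul_one, hU1, hP]
    rw [this]
    refine (Matrix.posSemidef_diagonal_iff.mpr fun i => ?_).mul_mul_conjTranspose_same U
    simp only [he]
    split <;> norm_num
  -- trace (P * H) = sum of positive parts
  have key : (P * H).trace = ∑ i, max (lam i) 0 := by
    rw [hspec, hP]
    have : U * Matrix.diagonal e * star U * (U * Matrix.diagonal lam * star U)
        = U * (Matrix.diagonal e * Matrix.diagonal lam) * star U := by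
      simp only [Matrix.mul_assoc]
      rw [show star U * (U * (Matrix.diagonal lam * star U))
          = Matrix.diagonal lam * star U from by
        rw [← Matrix.mul_assoc, hU2, Matrix.one_mul]]
    rw [this, trace_conj, Matrix.diagonal_mul_diagonal, Matrix.trace_diagonal]
    refine Finset.sum_congr rfl fun i _ => ?_
    simp only [he]
    rcases le_or_gt 0 (lam i) with h | h
    · simp [h, max_eq_left h]
    · simp [not_le.mpr h, max_eq_right h.le]
  -- trace H₁ = sum of eigenvalues of H₁
  have htr1 : H₁.trace = ∑ i, hH₁.isHermitian.eigenvalues i := by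
    conv_lhs => rw [hH₁.isHermitian.spectral_theorem]
    rw [Unitary.conjStarAlgAut_apply, Matrix.trace_mul_cycle]
    have : star (hH₁.isHermitian.eigenvectorUnitary : Matrix (Fin d) (Fin d) ℝ) *
        (hH₁.isHermitian.eigenvectorUnitary : Matrix (Fin d) (Fin d) ℝ) = 1 :=
      (Matrix.mem_unitaryGroup_iff').mp hH₁.isHermitian.eigenvectorUnitary.2
    rw [this, Matrix.one_mul, Matrix.trace_diagonal]
    simp [Function.comp]
  -- combine
  have h1 : (P * H).trace ≤ (P * H₁).trace := by
    have hsub : (P * H).trace = (P * H₁).trace - (P * H₂).trace := by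
      rw [hdec, Matrix.mul_sub, Matrix.trace_sub]
    rw [hsub]
    have := trace_mul_nonneg_of_posSemidef hPpsd hH₂
    linarith
  have h2 : (P * H₁).trace ≤ H₁.trace := by
    have := trace_mul_nonneg_of_posSemidef h1Ppsd hH₁
    rw [Matrix.sub_mul, Matrix.trace_sub, one_mul] at this
    linarith
  calc ∑ i, max (lam i) 0 = (P * H).trace := key.symm
    _ ≤ (P * H₁).trace := h1
    _ ≤ H₁.trace := h2
    _ = ∑ i, hH₁.isHermitian.eigenvalues i := htr1
end

section
/- Let X be a real-valued random variable with cdf F and E|X| < ∞, and p ∈ (0,1). The function h(x) = E[max{X − x, 0}] + (1−p)x attains its minimum over ℝ at x₀ = VaR_p(X) := inf{x : F(x) ≥ p}. -/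
open MeasureTheory Filter Topology

/-- h(x) = E[(X−x)⁺] + (1−p)x attains its minimum over ℝ at
x₀ = VaR_p(X) = inf{x : F(x) ≥ p}, where F is the cdf of X. -/
theorem stmt_18 {Ω : Type*} [MeasurableSpace Ω] (μ : Measure Ω)
    [IsProbabilityMeasure μ] (X : Ω → ℝ) (hX : Integrable X μ)
    (p : ℝ) (hp : p ∈ Set.Ioo (0:ℝ) 1)
    (F : ℝ → ℝ) (hF : ∀ t, F t = (μ {ω | X ω ≤ t}).toReal)
    (x₀ : ℝ) (hx₀ : x₀ = sInf {x : ℝ | p ≤ F x}) :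
    ∀ x : ℝ, (∫ ω, max (X ω - x₀) 0 ∂μ) + (1 - p) * x₀
      ≤ (∫ ω, max (X ω - x) 0 ∂μ) + (1 - p) * x := by
  intro x
  obtain ⟨hp0, hp1⟩ := hp
  -- measurable representative
  have hsm := hX.1
  set Y : Ω → ℝ := hsm.mk X with hYdef
  have hYm : Measurable Y := hsm.stronglyMeasurable_mk.measurable
  have hXY : X =ᵐ[μ] Y := hsm.ae_eq_mk
  have hYint : Integrable Y μ := hX.congr hXY
  -- cdf in terms of Y
  have hμeq : ∀ t, μ {ω | X ω ≤ t} = μ {ω | Y ω ≤ t} := by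
    intro t
    apply measure_congr
    filter_upwards [hXY] with ω h
    change (X ω ≤ t) = (Y ω ≤ t)
    rw [h]
  have hFY : ∀ t, F t = (μ {ω | Y ω ≤ t}).toReal := by
    intro t; rw [hF t, hμeq t]
  have hFmono : Monotone F := by
    intro s t hst
    rw [hFY s, hFY t]
    exact ENNReal.toReal_mono (measure_ne_top μ _)
      (measure_mono fun ω h => le_trans h hst)
  -- the set S
  set S : Set ℝ := {x : ℝ | p ≤ F x} with hS
  -- S is nonempty
  have hSne : S.Nonempty := by
    have hmono : Monotone (fun n : ℕ => {ω | Y ω ≤ (n : ℝ)}) := by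
      intro m n hmn ω h
      simp only [Set.mem_setOf_eq] at h ⊢
      exact le_trans h (by exact_mod_cast hmn)
    have hU : (⋃ n : ℕ, {ω | Y ω ≤ (n : ℝ)}) = Set.univ := by
      ext ω
      simp only [Set.mem_iUnion, Set.mem_setOf_eq, Set.mem_univ, iff_true]
      obtain ⟨n, hn⟩ := exists_nat_gt (Y ω)
      exact ⟨n, hn.le⟩
    have ht : Tendsto (fun n : ℕ => (μ {ω | Y ω ≤ (n : ℝ)}).toReal) atTop (𝓝 1) := by
      have h1 := tendsto_measure_iUnion_atTop (μ := μ) hmono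
      rw [hU] at h1
      have h2 := (ENNReal.tendsto_toReal (measure_ne_top μ _)).comp h1
      simpa [Function.comp_def] using h2
    have : ∀ᶠ n : ℕ in atTop, p < (μ {ω | Y ω ≤ (n : ℝ)}).toReal :=
      ht.eventually (eventually_gt_nhds hp1)
    obtain ⟨n, hn⟩ := this.exists
    exact ⟨(n : ℝ), by rw [Set.mem_setOf_eq, hFY]; exact hn.le⟩
  -- S is bounded below
  have hSbdd : BddBelow S := by
    have hanti : Antitone (fun n : ℕ => {ω | Y ω ≤ -(n : ℝ)}) := by
      intro m n hmn ω h
      simp only [Set.mem_setOf_eq] at h ⊢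
      have : -(n : ℝ) ≤ -(m : ℝ) := by
        have : (m : ℝ) ≤ (n : ℝ) := by exact_mod_cast hmn
        linarith
      linarith
    have hI : (⋂ n : ℕ, {ω | Y ω ≤ -(n : ℝ)}) = ∅ := by
      ext ω
      simp only [Set.mem_iInter, Set.mem_setOf_eq, Set.mem_empty_iff_false, iff_false, not_forall]
      obtain ⟨n, hn⟩ := exists_nat_gt (-(Y ω))
      exact ⟨n, by push_neg; linarith⟩
    have ht : Tendsto (fun n : ℕ => (μ {ω | Y ω ≤ -(n : ℝ)}).toReal) atTop (𝓝 0) := by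
      have h1 := tendsto_measure_iInter_atTop (μ := μ)
        (s := fun n : ℕ => {ω | Y ω ≤ -(n : ℝ)})
        (fun n => (hYm measurableSet_Iic).nullMeasurableSet) hanti
        ⟨0, measure_ne_top μ _⟩
      rw [hI] at h1
      have h2 := (ENNReal.tendsto_toReal (by simp)).comp h1
      simpa [Function.comp_def] using h2
    have : ∀ᶠ n : ℕ in atTop, (μ {ω | Y ω ≤ -(n : ℝ)}).toReal < p :=
      ht.eventually (eventually_lt_nhds hp0)
    obtain ⟨n, hn⟩ := this.exists
    refine ⟨-(n : ℝ), fun s hs => ?_⟩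
    by_contra hlt
    push_neg at hlt
    have h2 : F s ≤ F (-(n : ℝ)) := hFmono hlt.le
    rw [hFY (-(n:ℝ))] at h2
    exact absurd (le_trans hs h2) (not_le.2 hn)
  -- Fact A : p ≤ F x₀
  have hA : p ≤ F x₀ := by
    have hseq : ∀ n : ℕ, p ≤ F (x₀ + 1 / (n + 1)) := by
      intro n
      have hpos : (0:ℝ) < 1 / (n + 1) := by positivity
      have hlt : sInf S < x₀ + 1 / (n + 1) := by rw [← hx₀]; linarith
      obtain ⟨s, hsS, hslt⟩ := (csInf_lt_iff hSbdd hSne).1 hlt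
      exact le_trans hsS (hFmono hslt.le)
    have hanti : Antitone (fun n : ℕ => {ω | Y ω ≤ x₀ + 1 / ((n:ℝ) + 1)}) := by
      intro m n hmn ω h
      simp only [Set.mem_setOf_eq] at h ⊢
      have hmn' : (m : ℝ) ≤ (n : ℝ) := by exact_mod_cast hmn
      have : 1 / ((n:ℝ) + 1) ≤ 1 / ((m:ℝ) + 1) := by
        apply one_div_le_one_div_of_le <;> linarith
      linarith
    have hI : (⋂ n : ℕ, {ω | Y ω ≤ x₀ + 1 / ((n:ℝ) + 1)}) = {ω | Y ω ≤ x₀} := by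
      ext ω
      simp only [Set.mem_iInter, Set.mem_setOf_eq]
      constructor
      · intro h
        have htend : Tendsto (fun n : ℕ => x₀ + 1 / ((n:ℝ) + 1)) atTop (𝓝 (x₀ + 0)) :=
          tendsto_const_nhds.add tendsto_one_div_add_atTop_nhds_zero_nat
        rw [add_zero] at htend
        exact ge_of_tendsto htend (Eventually.of_forall h)
      · intro h n
        have : (0:ℝ) < 1 / ((n:ℝ) + 1) := by positivity
        linarith
    have ht : Tendsto (fun n : ℕ => (μ {ω | Y ω ≤ x₀ + 1 / ((n:ℝ) + 1)}).toReal) atTop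
        (𝓝 ((μ {ω | Y ω ≤ x₀}).toReal)) := by
      have h1 := tendsto_measure_iInter_atTop (μ := μ)
        (s := fun n : ℕ => {ω | Y ω ≤ x₀ + 1 / ((n:ℝ) + 1)})
        (fun n => (hYm measurableSet_Iic).nullMeasurableSet) hanti ⟨0, measure_ne_top μ _⟩
      rw [hI] at h1
      exact (ENNReal.tendsto_toReal (measure_ne_top μ _)).comp h1
    rw [hFY]
    refine ge_of_tendsto ht (Eventually.of_forall fun n => ?_)
    have := hseq n
    rwa [hFY] at this
  -- Fact B : μ {Y < x₀} ≤ p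
  have hB : (μ {ω | Y ω < x₀}).toReal ≤ p := by
    have hmono : Monotone (fun n : ℕ => {ω | Y ω ≤ x₀ - 1 / ((n:ℝ) + 1)}) := by
      intro m n hmn ω h
      simp only [Set.mem_setOf_eq] at h ⊢
      have hmn' : (m : ℝ) ≤ (n : ℝ) := by exact_mod_cast hmn
      have : 1 / ((n:ℝ) + 1) ≤ 1 / ((m:ℝ) + 1) := by
        apply one_div_le_one_div_of_le <;> linarith
      linarith
    have hU : (⋃ n : ℕ, {ω | Y ω ≤ x₀ - 1 / ((n:ℝ) + 1)}) = {ω | Y ω < x₀} := by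
      ext ω
      simp only [Set.mem_iUnion, Set.mem_setOf_eq]
      constructor
      · rintro ⟨n, hn⟩
        have : (0:ℝ) < 1 / ((n:ℝ) + 1) := by positivity
        linarith
      · intro h
        obtain ⟨n, hn⟩ := exists_nat_one_div_lt (show (0:ℝ) < x₀ - Y ω by linarith)
        exact ⟨n, by linarith⟩
    have ht : Tendsto (fun n : ℕ => (μ {ω | Y ω ≤ x₀ - 1 / ((n:ℝ) + 1)}).toReal) atTop
        (𝓝 ((μ {ω | Y ω < x₀}).toReal)) := by
      have h1 := tendsto_measure_iUnion_atTop (μ := μ) hmono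
      rw [hU] at h1
      exact (ENNReal.tendsto_toReal (measure_ne_top μ _)).comp h1
    refine le_of_tendsto ht (Eventually.of_forall fun n => ?_)
    have hnot : x₀ - 1 / ((n:ℝ) + 1) ∉ S := by
      intro hmem
      have h1 := csInf_le hSbdd hmem
      rw [← hx₀] at h1
      have : (0:ℝ) < 1 / ((n:ℝ) + 1) := by positivity
      linarith
    have h2 : ¬ p ≤ F (x₀ - 1 / ((n:ℝ) + 1)) := hnot
    push_neg at h2
    rw [hFY] at h2
    exact h2.le
  -- rewrite integrals in terms of Y
  have hintY : ∀ c : ℝ, Integrable (fun ω => max (Y ω - c) 0) μ :=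
    fun c => (hYint.sub (integrable_const c)).pos_part
  have hIeq : ∀ c : ℝ, (∫ ω, max (X ω - c) 0 ∂μ) = ∫ ω, max (Y ω - c) 0 ∂μ := by
    intro c
    apply integral_congr_ae
    filter_upwards [hXY] with ω h
    rw [h]
  rw [hIeq x₀, hIeq x]
  -- split on the position of x
  rcases le_total x₀ x with hle | hle
  · -- case x₀ ≤ x
    have hpt : ∀ ω, max (Y ω - x₀) 0 - max (Y ω - x) 0
        ≤ Set.indicator {ω | x₀ < Y ω} (fun _ => x - x₀) ω := by
      intro ω
      by_cases h : x₀ < Y ω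
      · rw [Set.indicator_of_mem (show ω ∈ {ω | x₀ < Y ω} from h)]
        have h1 : Y ω - x₀ ≤ max (Y ω - x) 0 + (x - x₀) := by
          have := le_max_left (Y ω - x) 0; linarith
        have h2 : (0:ℝ) ≤ max (Y ω - x) 0 + (x - x₀) := by
          have := le_max_right (Y ω - x) 0; linarith
        have := max_le h1 h2
        linarith
      · rw [Set.indicator_of_notMem (show ω ∉ {ω | x₀ < Y ω} from h)]
        push_neg at h
        have h1 : max (Y ω - x₀) 0 = 0 := max_eq_right (by linarith)
        have h2 : (0:ℝ) ≤ max (Y ω - x) 0 := le_max_right _ _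
        linarith
    have hms : MeasurableSet {ω | x₀ < Y ω} := hYm measurableSet_Ioi
    have hint : (∫ ω, Set.indicator {ω | x₀ < Y ω} (fun _ => x - x₀) ω ∂μ)
        = (μ {ω | x₀ < Y ω}).toReal * (x - x₀) := by
      rw [integral_indicator_const _ hms, smul_eq_mul]; rfl
    have hmeasle : (μ {ω | x₀ < Y ω}).toReal ≤ 1 - p := by
      have hcompl : {ω | x₀ < Y ω} = {ω | Y ω ≤ x₀}ᶜ := by
        ext ω; simp [not_le]
      have h3 : (μ {ω | Y ω ≤ x₀}ᶜ).toReal = 1 - (μ {ω | Y ω ≤ x₀}).toReal := by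
        rw [measure_compl (s := {ω | Y ω ≤ x₀}) (hYm measurableSet_Iic) (measure_ne_top μ _),
          ENNReal.toReal_sub_of_le (measure_mono (Set.subset_univ _)) (measure_ne_top μ _)]
        simp
      rw [hcompl, h3]
      have hpF : p ≤ (μ {ω | Y ω ≤ x₀}).toReal := by rw [← hFY]; exact hA
      linarith
    have hIle := integral_mono (μ := μ)
      (f := fun ω => max (Y ω - x₀) 0 - max (Y ω - x) 0)
      ((hintY x₀).sub (hintY x))
      ((integrable_const (x - x₀)).indicator hms) hpt
    rw [integral_sub (hintY x₀) (hintY x), hint] at hIle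
    have hfin : (μ {ω | x₀ < Y ω}).toReal * (x - x₀) ≤ (1 - p) * (x - x₀) :=
      mul_le_mul_of_nonneg_right hmeasle (by linarith)
    nlinarith [hIle, hfin]
  · -- case x ≤ x₀
    have hpt : ∀ ω, Set.indicator {ω | x₀ ≤ Y ω} (fun _ => x₀ - x) ω
        ≤ max (Y ω - x) 0 - max (Y ω - x₀) 0 := by
      intro ω
      by_cases h : x₀ ≤ Y ω
      · rw [Set.indicator_of_mem (show ω ∈ {ω | x₀ ≤ Y ω} from h)]
        have h1 : max (Y ω - x) 0 = Y ω - x := max_eq_left (by linarith)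
        have h2 : max (Y ω - x₀) 0 = Y ω - x₀ := max_eq_left (by linarith)
        rw [h1, h2]; linarith
      · rw [Set.indicator_of_notMem (show ω ∉ {ω | x₀ ≤ Y ω} from h)]
        push_neg at h
        have h1 : max (Y ω - x₀) 0 = 0 := max_eq_right (by linarith)
        have h2 : (0:ℝ) ≤ max (Y ω - x) 0 := le_max_right _ _
        linarith
    have hms : MeasurableSet {ω | x₀ ≤ Y ω} := hYm measurableSet_Ici
    have hint : (∫ ω, Set.indicator {ω | x₀ ≤ Y ω} (fun _ => x₀ - x) ω ∂μ)
        = (μ {ω | x₀ ≤ Y ω}).toReal * (x₀ - x) := by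
      rw [integral_indicator_const _ hms, smul_eq_mul]; rfl
    have hmeasge : 1 - p ≤ (μ {ω | x₀ ≤ Y ω}).toReal := by
      have hcompl : {ω | x₀ ≤ Y ω} = {ω | Y ω < x₀}ᶜ := by
        ext ω; simp [not_lt]
      have h3 : (μ {ω | Y ω < x₀}ᶜ).toReal = 1 - (μ {ω | Y ω < x₀}).toReal := by
        rw [measure_compl (s := {ω | Y ω < x₀}) (hYm measurableSet_Iio) (measure_ne_top μ _),
          ENNReal.toReal_sub_of_le (measure_mono (Set.subset_univ _)) (measure_ne_top μ _)]
        simp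
      rw [hcompl, h3]
      linarith
    have hIle := integral_mono (μ := μ)
      (g := fun ω => max (Y ω - x) 0 - max (Y ω - x₀) 0)
      ((integrable_const (x₀ - x)).indicator hms)
      ((hintY x).sub (hintY x₀)) hpt
    rw [integral_sub (hintY x) (hintY x₀), hint] at hIle
    have hfin : (1 - p) * (x₀ - x) ≤ (μ {ω | x₀ ≤ Y ω}).toReal * (x₀ - x) :=
      mul_le_mul_of_nonneg_right hmeasge (by linarith)
    nlinarith [hIle, hfin]
end
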